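/- Let $\alpha \in (0,1)$. For the generating function $\omega(\xi) = (1-\xi)^{\alpha}\left[1+\left(\frac{\alpha}{2}-\theta\right)(1-\xi)\right]$ with coefficients $\omega_k$, define $A_k = \tau^{-\alpha}\sum_{j=0}^{k}\omega_j$ for a fixed step size $\tau > 0$. If $\theta \in \left[\frac{\alpha}{2}-\frac{1-\alpha}{1+\alpha}, \frac{\alpha}{2}\right]$, then the sequence $A_k$ is positive and nonincreasing: $A_k \geq A_{k+1} > 0$ for all $k \geq 0$. -/

import Mathlib

noncomputable def genBinom (α : ℝ) (k : ℕ) : ℝ :=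
  (∏ j ∈ Finset.range k, (α - j)) / (Nat.factorial k)

noncomputable def kappa (α : ℝ) (k : ℕ) : ℝ := (-1 : ℝ) ^ k * genBinom α k

/-- Coefficients of `ω(ξ) = (1-ξ)^α [1 + (α/2 - θ)(1-ξ)]`. -/
noncomputable def omegaCoeff (α θ : ℝ) : ℕ → ℝ
  | 0 => 1 + α / 2 - θ
  | (k + 1) => (1 + α / 2 - θ) * kappa α (k + 1) + (θ - α / 2) * kappa α k

lemma kappa_zero (α : ℝ) : kappa α 0 = 1 := by
  simp [kappa, genBinom]

lemma kappa_succ (α : ℝ) (k : ℕ) :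
    kappa α (k + 1) = kappa α k * (((k : ℝ) - α) / (k + 1)) := by
  have hk : ((Nat.factorial k : ℝ)) ≠ 0 := by positivity
  have hk1 : ((k : ℝ) + 1) ≠ 0 := by positivity
  unfold kappa genBinom
  rw [Finset.prod_range_succ, Nat.factorial_succ, pow_succ]
  push_cast
  field_simp
  ring

lemma kappa_neg {α : ℝ} (hα : α ∈ Set.Ioo (0:ℝ) 1) : ∀ k, 1 ≤ k → kappa α k < 0 := by
  intro k hk
  induction k with
  | zero => omega
  | succ n ih =>
    rcases Nat.eq_or_lt_of_le hk with h | h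
    · have : n = 0 := by omega
      subst this
      rw [kappa_succ, kappa_zero]
      have := hα.1
      norm_num
      linarith
    · have hn : 1 ≤ n := by omega
      have h1 := ih hn
      rw [kappa_succ]
      have hpos : 0 < ((n : ℝ) - α) / (n + 1) := by
        apply div_pos
        · have : (1:ℝ) ≤ n := by exact_mod_cast hn
          linarith [hα.2]
        · positivity
      exact mul_neg_of_neg_of_pos h1 hpos

lemma kappa_sum {α : ℝ} (hα : α ∈ Set.Ioo (0:ℝ) 1) (k : ℕ) :
    ∑ j ∈ Finset.range (k + 1), kappa α j = -((k : ℝ) + 1) * kappa α (k + 1) / α := by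
  have hα0 : α ≠ 0 := ne_of_gt hα.1
  induction k with
  | zero =>
    simp [kappa_zero, kappa_succ, genBinom]
    field_simp
  | succ n ih =>
    rw [Finset.sum_range_succ, ih, kappa_succ α (n+1)]
    push_cast
    field_simp
    ring

/-- With `A_k = τ^{-α} ∑_{j=0}^k ω_j`, the sequence `A_k` is positive and
nonincreasing: `A_k ≥ A_{k+1} > 0`. -/
theorem stmt9 (α θ τ : ℝ) (hα : α ∈ Set.Ioo (0 : ℝ) 1) (hτ : 0 < τ)
    (hθ : θ ∈ Set.Icc (α / 2 - (1 - α) / (1 + α)) (α / 2))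
    (A : ℕ → ℝ)
    (hA : ∀ k : ℕ, A k = τ ^ (-α) * ∑ j ∈ Finset.range (k + 1), omegaCoeff α θ j) :
    ∀ k : ℕ, A (k + 1) ≤ A k ∧ 0 < A k := by
  obtain ⟨hα0, hα1⟩ := hα
  set d : ℝ := α / 2 - θ with hd
  have hd0 : 0 ≤ d := by simp [hd]; linarith [hθ.2]
  have hdub : d ≤ (1 - α) / (1 + α) := by
    have := hθ.1; simp [hd]; linarith
  have hτpos : (0:ℝ) < τ ^ (-α) := Real.rpow_pos_of_pos hτ _
  clear_value d
  -- S
  set S : ℕ → ℝ := fun k => ∑ j ∈ Finset.range (k + 1), kappa α j with hS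
  have hSpos : ∀ k, 0 < S k := by
    intro k
    rw [hS]
    simp only
    rw [kappa_sum ⟨hα0, hα1⟩ k]
    have hk := kappa_neg ⟨hα0, hα1⟩ (k+1) (by omega)
    have : 0 < -((k:ℝ)+1) * kappa α (k+1) := by nlinarith [Nat.cast_nonneg (α := ℝ) k]
    positivity
  have hSstep : ∀ k, S (k + 1) = S k + kappa α (k+1) := by
    intro k; rw [hS]; simp [Finset.sum_range_succ]
  have hSrat : ∀ k, S (k + 1) = S k * (((k:ℝ) + 1 - α) / ((k:ℝ) + 1)) := by
    intro k
    have h1 := kappa_sum ⟨hα0, hα1⟩ k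
    have h2 := kappa_sum ⟨hα0, hα1⟩ (k+1)
    have h3 := kappa_succ α (k+1)
    rw [hS]
    simp only
    rw [h2, h3, h1]
    push_cast
    have hne1 : ((k:ℝ)+1) ≠ 0 := by positivity
    have hne2 : ((k:ℝ)+2) ≠ 0 := by positivity
    have hne0 : α ≠ 0 := ne_of_gt hα0
    have : ((k:ℝ)+1) ≠ 0 := by positivity
    have : ((k:ℝ)+2) ≠ 0 := by positivity
    field_simp
  -- T: partial sums of omega
  set T : ℕ → ℝ := fun k => ∑ j ∈ Finset.range (k + 1), omegaCoeff α θ j with hT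
  have hTform : ∀ k, T (k + 1) = (1 + d) * S (k + 1) - d * S k := by
    intro k
    induction k with
    | zero =>
      rw [hT, hS]
      simp [Finset.sum_range_succ, omegaCoeff, kappa_zero]
      rw [hd]; ring
    | succ n ih =>
      have : T (n + 2) = T (n + 1) + omegaCoeff α θ (n + 2) := by
        rw [hT]; simp [Finset.sum_range_succ]
      rw [this, ih]
      have hs2 : S (n + 2) = S (n + 1) + kappa α (n + 2) := hSstep (n + 1)
      have hs1 : S (n + 1) = S n + kappa α (n + 1) := hSstep n
      simp only [omegaCoeff]
      rw [hs2, hs1]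
      rw [show (1:ℝ) + α/2 - θ = 1 + d by rw [hd]; ring,
          show θ - α/2 = -d by rw [hd]; ring]
      ring
  have hTpos : ∀ k, 0 < T k := by
    intro k
    cases k with
    | zero =>
      have h0 : T 0 = 1 + α/2 - θ := by rw [hT]; simp [omegaCoeff]
      rw [h0]; linarith [hθ.2]
    | succ n =>
      rw [hTform n, hSrat n]
      have hS0 : 0 < S n := hSpos n
      have key : (1 - α) - d * α > 0 := by
        have h1 : d * α ≤ (1 - α) / (1 + α) * α := by
          apply mul_le_mul_of_nonneg_right hdub (le_of_lt hα0)
        have h2 : (1 - α) / (1 + α) * α < 1 - α := by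
          rw [div_mul_eq_mul_div, div_lt_iff₀ (by linarith)]
          nlinarith
        linarith
      have hge : (1 - α) ≤ ((n:ℝ) + 1 - α) / ((n:ℝ) + 1) := by
        rw [le_div_iff₀ (by positivity)]
        nlinarith [Nat.cast_nonneg (α := ℝ) n]
      have h1d : (0:ℝ) < 1 + d := by linarith
      have hAA : (1 + d) * ((1 - α) * S n) ≤ (1 + d) * (((n:ℝ) + 1 - α) / ((n:ℝ) + 1) * S n) :=
        mul_le_mul_of_nonneg_left (mul_le_mul_of_nonneg_right hge hS0.le) h1d.le
      nlinarith [hAA, mul_pos key hS0]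
  -- omega nonpos
  have homega : ∀ k, omegaCoeff α θ (k + 1) ≤ 0 := by
    intro k
    simp only [omegaCoeff]
    rw [show (1:ℝ) + α/2 - θ = 1 + d by rw [hd]; ring,
        show θ - α/2 = -d by rw [hd]; ring]
    rw [kappa_succ]
    cases k with
    | zero =>
      rw [kappa_zero]
      push_cast
      norm_num
      nlinarith
    | succ n =>
      have hk := kappa_neg ⟨hα0, hα1⟩ (n + 1) (by omega)
      have hbr : 0 ≤ (1 + d) * (((n:ℝ)+1) - α) - d * (((n:ℝ)+1) + 1) := by
        have hcast : (1:ℝ) ≤ (n:ℝ) + 1 := by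
          have := Nat.cast_nonneg (α := ℝ) n; linarith
        have h1 : d * (1 + α) ≤ (1 - α) := (le_div_iff₀ (by linarith)).mp hdub
        nlinarith
      have heq : (1 + d) * (kappa α (n + 1) * ((((n + 1 : ℕ) : ℝ) - α) / (((n + 1 : ℕ) : ℝ) + 1))) + -d * kappa α (n + 1)
          = kappa α (n+1) * (((1 + d) * (((n:ℝ)+1) - α) - d * (((n:ℝ)+1) + 1)) / (((n:ℝ)+1) + 1)) := by
        push_cast
        have h0 : ((n:ℝ)+1+1) ≠ 0 := by positivity
        field_simp
        ring
      rw [heq]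
      apply mul_nonpos_of_nonpos_of_nonneg (le_of_lt hk)
      positivity
  intro k
  constructor
  · rw [hA (k+1), hA k]
    have : ∑ j ∈ Finset.range (k + 1 + 1), omegaCoeff α θ j
        = (∑ j ∈ Finset.range (k + 1), omegaCoeff α θ j) + omegaCoeff α θ (k+1) := by
      rw [Finset.sum_range_succ]
    rw [this]
    have := homega k
    nlinarith
  · rw [hA k]
    have := hTpos k
    rw [hT] at this
    simp only at this
    positivity
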